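/- For two locks, blocking type (P_1P_1, P_2) is impossible for a correct compositional translation, for any initial store. -/

import Mathlib

/-- Symbols of SYNCSIMPLE: `!` (bang) and `?` (ques). -/
inductive SSym | bang | ques
deriving DecidableEq

/-- A SYNCSIMPLE subprocess: a string over {!,?} ending with `0` (false) or `✓` (true). -/
abbrev SSub := List SSym × Bool

/-- A SYNCSIMPLE process: a multiset of subprocesses. -/
abbrev SProc := Multiset SSub

/-- The SYS reduction: a leading `!` and a leading `?` of two subprocesses are consumed. -/
def SysStep (P Q : SProc) : Prop :=
  ∃ (u1 u2 : List SSym) (b1 b2 : Bool) (R : SProc),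
    P = (SSym.bang :: u1, b1) ::ₘ (SSym.ques :: u2, b2) ::ₘ R ∧
    Q = (u1, b1) ::ₘ (u2, b2) ::ₘ R

/-- A process is successful if it contains the subprocess `✓`. -/
def SSuccessful (P : SProc) : Prop := (([], true) : SSub) ∈ P

def SMayConv (P : SProc) : Prop :=
  ∃ Q, Relation.ReflTransGen SysStep P Q ∧ SSuccessful Q

def SMustConv (P : SProc) : Prop :=
  ∀ Q, Relation.ReflTransGen SysStep P Q → SMayConv Q

/-- Lock operations: put `P_i` and take `T_i`. -/
inductive LOp | put | take
deriving DecidableEq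

abbrev LSym (k : ℕ) := LOp × Fin k
abbrev LSub (k : ℕ) := List (LSym k) × Bool
abbrev LProc (k : ℕ) := Multiset (LSub k)
/-- The store of `k` locks: `true` = full (■), `false` = empty (□). -/
abbrev Store (k : ℕ) := Fin k → Bool

/-- LOCKSIMPLE step: `P_i` fills an empty lock `i` (blocks if full);
    `T_i` empties lock `i` and never blocks. -/
def LockStep {k : ℕ} : (LProc k × Store k) → (LProc k × Store k) → Prop :=
  fun s t => ∃ (i : Fin k) (u : List (LSym k)) (b : Bool) (R : LProc k),
    ((s.1 = ((LOp.put, i) :: u, b) ::ₘ R ∧ s.2 i = false ∧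
      t.1 = (u, b) ::ₘ R ∧ t.2 = Function.update s.2 i true) ∨
     (s.1 = ((LOp.take, i) :: u, b) ::ₘ R ∧
      t.1 = (u, b) ::ₘ R ∧ t.2 = Function.update s.2 i false))

def LSuccessful {k : ℕ} (s : LProc k × Store k) : Prop := (([], true) : LSub k) ∈ s.1

def LMayConv {k : ℕ} (s : LProc k × Store k) : Prop :=
  ∃ t, Relation.ReflTransGen LockStep s t ∧ LSuccessful t

def LMustConv {k : ℕ} (s : LProc k × Store k) : Prop :=
  ∀ t, Relation.ReflTransGen LockStep s t → LMayConv t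

/-- The compositional translation determined by the strings `tb = τ(!)` and `tq = τ(?)`,
    applied to a subprocess. -/
def transSub {k : ℕ} (tb tq : List (LSym k)) (u : SSub) : LSub k :=
  (u.1.flatMap (fun c => match c with | SSym.bang => tb | SSym.ques => tq), u.2)

/-- The compositional translation applied to a process. -/
def transProc {k : ℕ} (tb tq : List (LSym k)) (P : SProc) : LProc k :=
  P.map (transSub tb tq)

/-- Correctness of the compositional translation `(tb, tq)` with initial store `IS`:
    may- and must-convergence are preserved and reflected. -/
def Correct {k : ℕ} (IS : Store k) (tb tq : List (LSym k)) : Prop :=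
  ∀ P : SProc,
    (SMayConv P ↔ LMayConv (transProc tb tq P, IS)) ∧
    (SMustConv P ↔ LMustConv (transProc tb tq P, IS))

/-- The solo execution of the string `s` from store `IS` reaches the point where
    `(put, i) :: rest` remains and deadlocks there since lock `i` is full. -/
def SoloBlocked {k : ℕ} (IS : Store k) (s : List (LSym k)) (i : Fin k)
    (rest : List (LSym k)) : Prop :=
  ∃ C : Store k,
    Relation.ReflTransGen LockStep (({(s, false)} : LProc k), IS)
      (({((LOp.put, i) :: rest, false)} : LProc k), C) ∧
    C i = true

/-- Blocking type `P_i`: the blocking prefix is `R P_i` with `R` free of `P_i, T_i`. -/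
def BlockingTypeP {k : ℕ} (IS : Store k) (s : List (LSym k)) (i : Fin k) : Prop :=
  ∃ r rest, s = r ++ (LOp.put, i) :: rest ∧ (∀ x ∈ r, x.2 ≠ i) ∧
    SoloBlocked IS s i rest

/-- Blocking type `P_i P_i`: the blocking prefix is `R₁ P_i R₂ P_i` with
    `R₂` free of `P_i, T_i`, deadlocking exactly before the last `P_i`. -/
def BlockingTypePP {k : ℕ} (IS : Store k) (s : List (LSym k)) (i : Fin k) : Prop :=
  ∃ r1 r2 rest, s = r1 ++ (LOp.put, i) :: r2 ++ (LOp.put, i) :: rest ∧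
    (∀ x ∈ r2, x.2 ≠ i) ∧ SoloBlocked IS s i rest

section Aux

variable {k : ℕ}

/-- Deterministic solo execution of a string of lock operations. -/
def ExecL : Store k → List (LSym k) → Store k → Prop
  | σ, [], τ => τ = σ
  | σ, (LOp.take, i) :: w, τ => ExecL (Function.update σ i false) w τ
  | σ, (LOp.put, i) :: w, τ => σ i = false ∧ ExecL (Function.update σ i true) w τ

lemma execL_append {p : List (LSym k)} :
    ∀ {σ τ ρ : Store k} {q : List (LSym k)},
      ExecL σ p τ → ExecL τ q ρ → ExecL σ (p ++ q) ρ := by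
  induction p with
  | nil => intro σ τ ρ q h1 h2; cases h1; exact h2
  | cons x w ih =>
    intro σ τ ρ q h1 h2
    obtain ⟨op, i⟩ := x
    cases op with
    | put => exact ⟨h1.1, ih h1.2 h2⟩
    | take => exact ih h1 h2

lemma execL_run {w : List (LSym k)} :
    ∀ {σ τ : Store k}, ExecL σ w τ → ∀ (s : List (LSym k)) (b : Bool) (R : LProc k),
      Relation.ReflTransGen LockStep ((w ++ s, b) ::ₘ R, σ) ((s, b) ::ₘ R, τ) := by
  induction w with
  | nil => intro σ τ h s b R; cases h; exact Relation.ReflTransGen.refl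
  | cons x w ih =>
    intro σ τ h s b R
    obtain ⟨op, i⟩ := x
    cases op with
    | put =>
      refine Relation.ReflTransGen.head ?_ (ih h.2 s b R)
      exact ⟨i, w ++ s, b, R, Or.inl ⟨rfl, h.1, rfl, rfl⟩⟩
    | take =>
      refine Relation.ReflTransGen.head ?_ (ih h s b R)
      exact ⟨i, w ++ s, b, R, Or.inr ⟨rfl, rfl, rfl⟩⟩

lemma solo_step {w : List (LSym k)} {b : Bool} {σ : Store k} {S : LProc k × Store k}
    (h : LockStep (({(w, b)} : LProc k), σ) S) :
    ∃ x w' τ, w = x :: w' ∧ S = (({(w', b)} : LProc k), τ) ∧ ExecL σ [x] τ := by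
  obtain ⟨i, u, b', R, hc⟩ := h
  rcases hc with ⟨h1, h2, h3, h4⟩ | ⟨h1, h3, h4⟩
  · rw [Multiset.singleton_eq_cons_iff] at h1
    obtain ⟨he, hR⟩ := h1
    obtain ⟨hw, hb⟩ := Prod.mk.injEq .. ▸ he
    refine ⟨(LOp.put, i), u, Function.update σ i true, hw, ?_, h2, rfl⟩
    subst hb hR
    exact Prod.ext (by simpa using h3) h4
  · rw [Multiset.singleton_eq_cons_iff] at h1
    obtain ⟨he, hR⟩ := h1
    obtain ⟨hw, hb⟩ := Prod.mk.injEq .. ▸ he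
    refine ⟨(LOp.take, i), u, Function.update σ i false, hw, ?_, rfl⟩
    subst hb hR
    exact Prod.ext (by simpa using h3) h4

lemma solo_run {w : List (LSym k)} {b : Bool} {σ : Store k} {S : LProc k × Store k}
    (h : Relation.ReflTransGen LockStep (({(w, b)} : LProc k), σ) S) :
    ∃ p z τ, w = p ++ z ∧ S = (({(z, b)} : LProc k), τ) ∧ ExecL σ p τ := by
  induction h with
  | refl => exact ⟨[], w, σ, rfl, rfl, rfl⟩
  | tail _ hbc ih =>
    obtain ⟨p, z, τ, hw, rfl, hex⟩ := ih
    obtain ⟨x, z', τ', hz, rfl, hex1⟩ := solo_step hbc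
    exact ⟨p ++ [x], z', τ', by simp [hw, hz], rfl, execL_append hex hex1⟩

lemma execL_untouched {w : List (LSym k)} :
    ∀ {σ τ : Store k} {i : Fin k}, ExecL σ w τ → (∀ x ∈ w, x.2 ≠ i) → τ i = σ i := by
  induction w with
  | nil => intro σ τ i h _; cases h; rfl
  | cons x w ih =>
    intro σ τ i h hw
    obtain ⟨op, i'⟩ := x
    have hne : i' ≠ i := hw _ (List.mem_cons_self)
    cases op with
    | put => rw [ih h.2 fun y hy => hw y (List.mem_cons_of_mem _ hy),
        Function.update_of_ne (Ne.symm hne)]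
    | take => rw [ih h fun y hy => hw y (List.mem_cons_of_mem _ hy),
        Function.update_of_ne (Ne.symm hne)]

lemma execL_mono {w : List (LSym k)} :
    ∀ {σ σ' τ : Store k}, ExecL σ w τ → (∀ i, σ' i = true → σ i = true) →
      ∃ τ', ExecL σ' w τ' ∧ (∀ i, (∃ x ∈ w, x.2 = i) → τ' i = τ i) ∧
        (∀ i, (∀ x ∈ w, x.2 ≠ i) → τ' i = σ' i) := by
  induction w with
  | nil =>
    intro σ σ' τ h _; cases h
    exact ⟨σ', rfl, fun i hi => by simp at hi, fun i _ => rfl⟩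
  | cons x w ih =>
    intro σ σ' τ h hmono
    obtain ⟨op, j⟩ := x
    cases op with
    | put =>
      obtain ⟨hσj, hex⟩ := h
      have hσ'j : σ' j = false := by
        cases hj : σ' j
        · rfl
        · rw [hmono j hj] at hσj; exact absurd hσj (by simp)
      have hmono' : ∀ i, Function.update σ' j true i = true →
          Function.update σ j true i = true := by
        intro i hi
        by_cases hij : i = j
        · subst hij; simp
        · rw [Function.update_of_ne hij] at hi ⊢; exact hmono i hi
      obtain ⟨τ', hex', ht, hu⟩ := ih hex hmono'
      refine ⟨τ', ⟨hσ'j, hex'⟩, ?_, ?_⟩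
      · intro i hi
        by_cases htw : ∃ x ∈ w, x.2 = i
        · exact ht i htw
        · push_neg at htw
          obtain ⟨x, hx, hxi⟩ := hi
          rcases List.mem_cons.mp hx with rfl | hx'
          · simp only at hxi; subst hxi
            rw [hu j htw, execL_untouched hex htw]
            simp
          · exact absurd hxi (htw x hx')
      · intro i hi
        have hji : j ≠ i := hi _ (List.mem_cons_self)
        rw [hu i fun y hy => hi y (List.mem_cons_of_mem _ hy),
          Function.update_of_ne (Ne.symm hji)]
    | take =>
      have hmono' : ∀ i, Function.update σ' j false i = true →
          Function.update σ j false i = true := by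
        intro i hi
        by_cases hij : i = j
        · subst hij; simp at hi
        · rw [Function.update_of_ne hij] at hi ⊢; exact hmono i hi
      obtain ⟨τ', hex', ht, hu⟩ := ih h hmono'
      refine ⟨τ', hex', ?_, ?_⟩
      · intro i hi
        by_cases htw : ∃ x ∈ w, x.2 = i
        · exact ht i htw
        · push_neg at htw
          obtain ⟨x, hx, hxi⟩ := hi
          rcases List.mem_cons.mp hx with rfl | hx'
          · simp only at hxi; subst hxi
            rw [hu j htw, execL_untouched (w := w) (σ := Function.update σ j false) h htw]
            simp
          · exact absurd hxi (htw x hx')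
      · intro i hi
        have hji : j ≠ i := hi _ (List.mem_cons_self)
        rw [hu i fun y hy => hi y (List.mem_cons_of_mem _ hy),
          Function.update_of_ne (Ne.symm hji)]

end Aux
section Aux2

variable {α : Type*}

lemma msA (a b c : α) (m n : ℕ) :
    Multiset.replicate (m+1) a + Multiset.replicate n b + {c}
      = a ::ₘ (Multiset.replicate m a + Multiset.replicate n b + {c}) := by
  simp only [Multiset.replicate_succ, ← Multiset.singleton_add]; abel

lemma msA1 (a b c : α) (n : ℕ) :
    Multiset.replicate (0+1) a + Multiset.replicate n b + {c}
      = a ::ₘ (Multiset.replicate n b + {c}) := by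
  simp only [Multiset.replicate_succ, Multiset.replicate_zero, ← Multiset.singleton_add]; abel

lemma msB (b c : α) (n : ℕ) :
    b ::ₘ (Multiset.replicate n b + {c}) = Multiset.replicate (n+1) b + {c} := by
  simp only [Multiset.replicate_succ, ← Multiset.singleton_add]; abel

lemma msB' (a b c : α) (m n : ℕ) :
    b ::ₘ (Multiset.replicate m a + Multiset.replicate n b + {c})
      = Multiset.replicate m a + Multiset.replicate (n+1) b + {c} := by
  simp only [Multiset.replicate_succ, ← Multiset.singleton_add]; abel

lemma msC (a b c : α) (m n : ℕ) :
    Multiset.replicate m a + Multiset.replicate n b + {c}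
      = c ::ₘ (Multiset.replicate m a + Multiset.replicate n b) := by
  simp only [← Multiset.singleton_add]; abel

lemma mem_state2 {b c x : α} {n : ℕ}
    (hx : x ∈ Multiset.replicate n b + {c}) : x = b ∨ x = c := by
  rcases Multiset.mem_add.mp hx with h | h
  · exact Or.inl (Multiset.eq_of_mem_replicate h)
  · exact Or.inr (Multiset.mem_singleton.mp h)

end Aux2

section Aux3

lemma runC {IS C : Store 2} {pre restb : List (LSym 2)}
    (hexec : ExecL IS pre C) (hC0 : C 0 = true)
    (hmem : (LOp.put, (0 : Fin 2)) ∈ pre) (hIS1 : IS 1 = true)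
    {σ : Store 2} (hσ : σ 0 = true → IS 0 = true) :
    ∃ σ' : Store 2, σ' 0 = true ∧ ∀ (b : Bool) (R : LProc 2),
      Relation.ReflTransGen LockStep
        ((pre ++ (LOp.put, (0 : Fin 2)) :: restb, b) ::ₘ R, σ)
        (((LOp.put, (0 : Fin 2)) :: restb, b) ::ₘ R, σ') := by
  have hmono : ∀ i : Fin 2, σ i = true → IS i = true := by
    intro i
    fin_cases i
    · exact hσ
    · exact fun _ => hIS1
  obtain ⟨τ', hex', ht, -⟩ := execL_mono hexec hmono
  refine ⟨τ', ?_, fun b R => execL_run hex' _ b R⟩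
  rw [ht 0 ⟨(LOp.put, 0), hmem, rfl⟩]
  exact hC0

lemma dead_not_mayconv {restb wf : List (LSym 2)} {n : ℕ} {σ : Store 2}
    (h0 : σ 0 = true)
    (hwf : wf = [] ∨ ∃ j w2, wf = (LOp.put, j) :: w2 ∧ σ j = true) :
    ¬ LMayConv (Multiset.replicate n (((LOp.put, (0 : Fin 2)) :: restb, true) : LSub 2)
        + {((wf, false) : LSub 2)}, σ) := by
  have hnostep : ∀ S, ¬ LockStep (Multiset.replicate n (((LOp.put, (0 : Fin 2)) :: restb, true) : LSub 2)
      + {((wf, false) : LSub 2)}, σ) S := by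
    rintro S ⟨i, u, b, R, hc⟩
    rcases hc with ⟨h1, h2, -, -⟩ | ⟨h1, -, -⟩
    · dsimp only at h1 h2
      have hx : (((LOp.put, i) :: u, b) : LSub 2) ∈ Multiset.replicate n (((LOp.put, (0 : Fin 2)) :: restb, true) : LSub 2)
          + {((wf, false) : LSub 2)} := by
        rw [h1]; exact Multiset.mem_cons_self _ _
      rcases mem_state2 hx with hx | hx
      · have hi : i = 0 := by
          have := congrArg (fun y : LSub 2 => y.1) hx
          simp only [List.cons.injEq, Prod.mk.injEq] at this
          exact this.1.2
        rw [hi, h0] at h2; cases h2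
      · rcases hwf with rfl | ⟨j, w2, rfl, hj⟩
        · simp at hx
        · have hi : i = j := by
            have := congrArg (fun y : LSub 2 => y.1) hx
            simp only [List.cons.injEq, Prod.mk.injEq] at this
            exact this.1.2
          rw [hi, hj] at h2; cases h2
    · dsimp only at h1
      have hx : (((LOp.take, i) :: u, b) : LSub 2) ∈ Multiset.replicate n (((LOp.put, (0 : Fin 2)) :: restb, true) : LSub 2)
          + {((wf, false) : LSub 2)} := by
        rw [h1]; exact Multiset.mem_cons_self _ _
      rcases mem_state2 hx with hx | hx
      · have := congrArg (fun y : LSub 2 => y.1) hx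
        simp at this
      · rcases hwf with rfl | ⟨j, w2, rfl, hj⟩
        · simp at hx
        · have := congrArg (fun y : LSub 2 => y.1) hx
          simp at this
  have hnsucc : ¬ LSuccessful (Multiset.replicate n (((LOp.put, (0 : Fin 2)) :: restb, true) : LSub 2)
      + {((wf, false) : LSub 2)}, σ) := by
    intro h
    rcases mem_state2 h with hx | hx
    · simp at hx
    · simp at hx
  rintro ⟨t, hrtg, hsucc⟩
  rcases Relation.ReflTransGen.cases_head hrtg with heq | ⟨c, hstep, -⟩
  · rw [← heq] at hsucc; exact hnsucc hsucc
  · exact hnostep c hstep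

end Aux3
section MainLemma

lemma stepP {j : Fin 2} {w2 : List (LSym 2)} {b : Bool} (M : LProc 2) (σ : Store 2)
    (h : σ j = false) :
    LockStep ((((LOp.put, j) :: w2, b) : LSub 2) ::ₘ M, σ)
      (((w2, b) : LSub 2) ::ₘ M, Function.update σ j true) :=
  ⟨j, w2, b, M, Or.inl ⟨rfl, h, rfl, rfl⟩⟩

lemma stepT {j : Fin 2} {w2 : List (LSym 2)} {b : Bool} (M : LProc 2) (σ : Store 2) :
    LockStep ((((LOp.take, j) :: w2, b) : LSub 2) ::ₘ M, σ)
      (((w2, b) : LSub 2) ::ₘ M, Function.update σ j false) :=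
  ⟨j, w2, b, M, Or.inr ⟨rfl, rfl, rfl⟩⟩

lemma ML {IS C : Store 2} {pre restb tb : List (LSym 2)}
    (hIS1 : IS 1 = true) (htb : tb = pre ++ (LOp.put, (0 : Fin 2)) :: restb)
    (hexec : ExecL IS pre C) (hC0 : C 0 = true) (hmem : (LOp.put, (0 : Fin 2)) ∈ pre)
    (w : List (LSym 2)) :
    ∀ (σ : Store 2) (kk : ℕ), (σ 0 = true → IS 0 = true ∨ 1 ≤ kk) →
    ∃ m Q, Relation.ReflTransGen LockStep
        (Multiset.replicate m ((tb, true) : LSub 2)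
          + Multiset.replicate kk (((LOp.put, (0 : Fin 2)) :: restb, true) : LSub 2)
          + {((w, false) : LSub 2)}, σ) Q
      ∧ 1 ≤ kk + m ∧ ¬ LMayConv Q := by
  induction w with
  | nil =>
    intro σ kk hinv
    by_cases h0 : σ 0 = true → IS 0 = true
    · obtain ⟨σ', hσ'0, hrunC⟩ := runC hexec hC0 hmem hIS1 h0
      refine ⟨0+1, (Multiset.replicate (kk+1) (((LOp.put, (0 : Fin 2)) :: restb, true) : LSub 2)
        + {((([] : List (LSym 2)), false) : LSub 2)}, σ'), ?_, by omega,
        dead_not_mayconv hσ'0 (Or.inl rfl)⟩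
      have run1 := hrunC true (Multiset.replicate kk (((LOp.put, (0 : Fin 2)) :: restb, true) : LSub 2)
        + {((([] : List (LSym 2)), false) : LSub 2)})
      rw [← htb] at run1
      rw [msA1, ← msB]
      exact run1
    · push_neg at h0
      obtain ⟨hσ0, hIS0⟩ := h0
      have hk : 1 ≤ kk := (hinv hσ0).resolve_left hIS0
      refine ⟨0, (Multiset.replicate kk (((LOp.put, (0 : Fin 2)) :: restb, true) : LSub 2)
        + {((([] : List (LSym 2)), false) : LSub 2)}, σ), ?_, by omega,
        dead_not_mayconv hσ0 (Or.inl rfl)⟩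
      simp only [Multiset.replicate_zero, zero_add]
      exact Relation.ReflTransGen.refl
  | cons x w2 ih =>
    intro σ kk hinv
    obtain ⟨op, j⟩ := x
    by_cases h0 : σ 0 = true → IS 0 = true
    · obtain ⟨σ', hσ'0, hrunC⟩ := runC hexec hC0 hmem hIS1 h0
      cases op with
      | take =>
        obtain ⟨m', Q, ihrun, ihm, ihn⟩ := ih (Function.update σ' j false) (kk+1)
          (fun _ => Or.inr (by omega))
        refine ⟨m'+1, Q, ?_, by omega, ihn⟩
        have run1 := hrunC true (Multiset.replicate m' ((tb, true) : LSub 2)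
          + Multiset.replicate kk (((LOp.put, (0 : Fin 2)) :: restb, true) : LSub 2)
          + {((((LOp.take, j) :: w2 : List (LSym 2)), false) : LSub 2)})
        rw [← htb] at run1
        rw [msA]
        refine Relation.ReflTransGen.trans run1 ?_
        rw [msB', msC]
        refine Relation.ReflTransGen.head (stepT _ _) ?_
        rw [← msC]
        exact ihrun
      | put =>
        cases hj : σ' j with
        | true =>
          refine ⟨0+1, (Multiset.replicate (kk+1) (((LOp.put, (0 : Fin 2)) :: restb, true) : LSub 2)
            + {((((LOp.put, j) :: w2 : List (LSym 2)), false) : LSub 2)}, σ'), ?_, by omega,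
            dead_not_mayconv hσ'0 (Or.inr ⟨j, w2, rfl, hj⟩)⟩
          have run1 := hrunC true (Multiset.replicate kk (((LOp.put, (0 : Fin 2)) :: restb, true) : LSub 2)
            + {((((LOp.put, j) :: w2 : List (LSym 2)), false) : LSub 2)})
          rw [← htb] at run1
          rw [msA1, ← msB]
          exact run1
        | false =>
          obtain ⟨m', Q, ihrun, ihm, ihn⟩ := ih (Function.update σ' j true) (kk+1)
            (fun _ => Or.inr (by omega))
          refine ⟨m'+1, Q, ?_, by omega, ihn⟩
          have run1 := hrunC true (Multiset.replicate m' ((tb, true) : LSub 2)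
            + Multiset.replicate kk (((LOp.put, (0 : Fin 2)) :: restb, true) : LSub 2)
            + {((((LOp.put, j) :: w2 : List (LSym 2)), false) : LSub 2)})
          rw [← htb] at run1
          rw [msA]
          refine Relation.ReflTransGen.trans run1 ?_
          rw [msB', msC]
          refine Relation.ReflTransGen.head (stepP _ _ hj) ?_
          rw [← msC]
          exact ihrun
    · push_neg at h0
      obtain ⟨hσ0, hIS0⟩ := h0
      have hk : 1 ≤ kk := (hinv hσ0).resolve_left hIS0
      cases op with
      | take =>
        obtain ⟨m', Q, ihrun, ihm, ihn⟩ := ih (Function.update σ j false) kk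
          (fun _ => Or.inr hk)
        refine ⟨m', Q, ?_, by omega, ihn⟩
        rw [msC]
        refine Relation.ReflTransGen.head (stepT _ _) ?_
        rw [← msC]
        exact ihrun
      | put =>
        cases hj : σ j with
        | true =>
          refine ⟨0, (Multiset.replicate kk (((LOp.put, (0 : Fin 2)) :: restb, true) : LSub 2)
            + {((((LOp.put, j) :: w2 : List (LSym 2)), false) : LSub 2)}, σ), ?_, by omega,
            dead_not_mayconv hσ0 (Or.inr ⟨j, w2, rfl, hj⟩)⟩
          simp only [Multiset.replicate_zero, zero_add]
          exact Relation.ReflTransGen.refl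
        | false =>
          obtain ⟨m', Q, ihrun, ihm, ihn⟩ := ih (Function.update σ j true) kk
            (fun _ => Or.inr hk)
          refine ⟨m', Q, ?_, by omega, ihn⟩
          rw [msC]
          refine Relation.ReflTransGen.head (stepP _ _ hj) ?_
          rw [← msC]
          exact ihrun

end MainLemma
section SSide

lemma sys_no_step_F {m : ℕ} {S : SProc}
    (h : SysStep (([], true) ::ₘ ([], false) ::ₘ
      Multiset.replicate m (([SSym.bang], true) : SSub)) S) : False := by
  obtain ⟨u1, u2, b1, b2, R, h1, -⟩ := h
  have hx : ((SSym.ques :: u2, b2) : SSub) ∈ (([], true) ::ₘ ([], false) ::ₘ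
      Multiset.replicate m (([SSym.bang], true) : SSub)) := by
    rw [h1]; exact Multiset.mem_cons_of_mem (Multiset.mem_cons_self _ _)
  rcases Multiset.mem_cons.mp hx with h | hx
  · simp at h
  rcases Multiset.mem_cons.mp hx with h | hx
  · simp at h
  · have := Multiset.eq_of_mem_replicate hx
    simp at this

lemma sys_step_inv {m : ℕ} {S : SProc}
    (h : SysStep (Multiset.replicate (m+1) (([SSym.bang], true) : SSub)
      + {(([SSym.ques], false) : SSub)}) S) :
    S = ([], true) ::ₘ ([], false) ::ₘ Multiset.replicate m (([SSym.bang], true) : SSub) := by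
  obtain ⟨u1, u2, b1, b2, R, h1, h2⟩ := h
  have e : Multiset.replicate (m+1) (([SSym.bang], true) : SSub)
      + {(([SSym.ques], false) : SSub)}
      = ([SSym.bang], true) ::ₘ ([SSym.ques], false) ::ₘ
        Multiset.replicate m (([SSym.bang], true) : SSub) := by
    simp only [Multiset.replicate_succ, ← Multiset.singleton_add]; abel
  rw [e] at h1
  have hx1 : ((SSym.bang :: u1, b1) : SSub) = (([SSym.bang], true) : SSub) := by
    have hm : ((SSym.bang :: u1, b1) : SSub) ∈ (([SSym.bang], true) ::ₘ ([SSym.ques], false) ::ₘ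
        Multiset.replicate m (([SSym.bang], true) : SSub)) := by
      rw [h1]; exact Multiset.mem_cons_self _ _
    rcases Multiset.mem_cons.mp hm with h | hm
    · exact h
    rcases Multiset.mem_cons.mp hm with h | hm
    · simp at h
    · exact Multiset.eq_of_mem_replicate hm
  have hx2 : ((SSym.ques :: u2, b2) : SSub) = (([SSym.ques], false) : SSub) := by
    have hm : ((SSym.ques :: u2, b2) : SSub) ∈ (([SSym.bang], true) ::ₘ ([SSym.ques], false) ::ₘ
        Multiset.replicate m (([SSym.bang], true) : SSub)) := by
      rw [h1]; exact Multiset.mem_cons_of_mem (Multiset.mem_cons_self _ _)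
    rcases Multiset.mem_cons.mp hm with h | hm
    · simp at h
    rcases Multiset.mem_cons.mp hm with h | hm
    · exact h
    · have := Multiset.eq_of_mem_replicate hm
      simp at this
  simp only [Prod.mk.injEq, List.cons.injEq, true_and] at hx1 hx2
  obtain ⟨rfl, rfl⟩ := hx1
  obtain ⟨rfl, rfl⟩ := hx2
  have hR := (Multiset.cons_inj_right _).mp ((Multiset.cons_inj_right _).mp h1)
  rw [← hR] at h2
  exact h2

lemma smustconv (m : ℕ) :
    SMustConv (Multiset.replicate (m+1) (([SSym.bang], true) : SSub)
      + {(([SSym.ques], false) : SSub)}) := by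
  have hstep : SysStep (Multiset.replicate (m+1) (([SSym.bang], true) : SSub)
      + {(([SSym.ques], false) : SSub)})
      (([], true) ::ₘ ([], false) ::ₘ Multiset.replicate m (([SSym.bang], true) : SSub)) := by
    refine ⟨[], [], true, false, Multiset.replicate m (([SSym.bang], true) : SSub), ?_, rfl⟩
    simp only [Multiset.replicate_succ, ← Multiset.singleton_add]; abel
  have hsuccF : SSuccessful (([], true) ::ₘ ([], false) ::ₘ
      Multiset.replicate m (([SSym.bang], true) : SSub)) := Multiset.mem_cons_self _ _
  intro Q hrtg
  rcases Relation.ReflTransGen.cases_head hrtg with heq | ⟨c, hst, hrtg'⟩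
  · exact ⟨_, heq ▸ Relation.ReflTransGen.single hstep, hsuccF⟩
  · have hc := sys_step_inv hst
    subst hc
    rcases Relation.ReflTransGen.cases_head hrtg' with heq | ⟨d, hst', -⟩
    · exact ⟨Q, Relation.ReflTransGen.refl, heq ▸ hsuccF⟩
    · exact absurd hst' (fun h => sys_no_step_F h)

end SSide
/-- for two locks, blocking type `(P_1P_1, P_2)` is impossible for a
correct compositional translation, for any initial store. -/
theorem no_blocking_type_PP_P2 :
    ∀ (IS : Store 2) (tb tq : List (LSym 2)),
      Correct IS tb tq →
      BlockingTypePP IS tb 0 → BlockingTypeP IS tq 1 → False := by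
  intro IS tb tq hcor hPP hP
  obtain ⟨r, restq, htq, hr, Cq, hrunq, hCq1⟩ := hP
  obtain ⟨r1, r2, restb, htb, hr2, Cb, hrunb, hCb0⟩ := hPP
  -- analyze the solo run of tq : it executes exactly r, hence IS 1 = true
  obtain ⟨p, z, τ, hsplit, hS, hex⟩ := solo_run hrunq
  have h1 := congrArg Prod.fst hS
  have h2 := congrArg Prod.snd hS
  dsimp only at h1 h2
  have hz := Multiset.singleton_inj.mp h1
  have hz1 : (LOp.put, (1 : Fin 2)) :: restq = z := congrArg Prod.fst hz
  subst h2
  rw [← hz1] at hsplit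
  have hp : p = r := by
    apply List.append_cancel_right (as := p) (bs := (LOp.put, (1 : Fin 2)) :: restq)
    rw [← hsplit, htq]
  have hIS1 : IS 1 = true := by
    have hu := execL_untouched hex (i := 1) (by rw [hp]; exact hr)
    rw [← hu]
    exact hCq1
  -- analyze the solo run of tb
  obtain ⟨p', z', τ', hsplit', hS', hex'⟩ := solo_run hrunb
  have h1' := congrArg Prod.fst hS'
  have h2' := congrArg Prod.snd hS'
  dsimp only at h1' h2'
  have hz' := Multiset.singleton_inj.mp h1'
  have hz1' : (LOp.put, (0 : Fin 2)) :: restb = z' := congrArg Prod.fst hz'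
  subst h2'
  rw [← hz1'] at hsplit'
  have hp' : p' = r1 ++ (LOp.put, (0 : Fin 2)) :: r2 := by
    apply List.append_cancel_right (as := p') (bs := (LOp.put, (0 : Fin 2)) :: restb)
    rw [← hsplit', htb]
  have hmem : (LOp.put, (0 : Fin 2)) ∈ p' := by
    rw [hp']; simp
  -- run the main construction
  obtain ⟨m, Q, hrun, hm, hnQ⟩ := ML hIS1 hsplit' hex' hCb0 hmem tq IS 0 (fun h => Or.inl h)
  obtain ⟨m', rfl⟩ : ∃ m', m = m' + 1 := ⟨m - 1, by omega⟩
  have htrans : transProc tb tq (Multiset.replicate (m'+1) (([SSym.bang], true) : SSub)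
      + {(([SSym.ques], false) : SSub)})
      = Multiset.replicate (m'+1) ((tb, true) : LSub 2) + {((tq, false) : LSub 2)} := by
    simp [transProc, transSub]
  have hmust := (hcor _).2.mp (smustconv m')
  rw [htrans] at hmust
  have hstart : Multiset.replicate (m'+1) ((tb, true) : LSub 2)
      + Multiset.replicate 0 (((LOp.put, (0 : Fin 2)) :: restb, true) : LSub 2)
      + {((tq, false) : LSub 2)}
      = Multiset.replicate (m'+1) ((tb, true) : LSub 2) + {((tq, false) : LSub 2)} := by
    simp
  rw [hstart] at hrun
  exact hnQ (hmust Q hrun)
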